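/- Let A be an m×K real matrix, π the exact row-norm distribution π(i) = ‖A_{i,:}‖₂²/‖A‖_F², and C the c×K sketch matrix with rows A_{i_j,:}/√(c·π(i_j)) for i.i.d. draws i_j ∼ π. Then E[‖AᵀA − CᵀC‖_F²] ≤ ‖A‖_F⁴/c. -/

import Mathlib

open Matrix Finset

noncomputable section

lemma sum_pi_prod {m c : ℕ} (φ : Fin c → Fin m → ℝ) :
    ∑ f : Fin c → Fin m, ∏ j, φ j (f j) = ∏ j, ∑ i, φ j i := by
  rw [Finset.prod_univ_sum, Fintype.piFinset_univ]

lemma marg0 {m c : ℕ} (π : Fin m → ℝ) (hπ1 : ∑ i, π i = 1) :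
    ∑ f : Fin c → Fin m, ∏ j, π (f j) = 1 := by
  rw [sum_pi_prod (fun _ => π)]
  simp [hπ1]

lemma marg1 {m c : ℕ} (π : Fin m → ℝ) (hπ1 : ∑ i, π i = 1)
    (Z : Fin m → ℝ) (j₀ : Fin c) :
    ∑ f : Fin c → Fin m, (∏ j, π (f j)) * Z (f j₀) = ∑ i, π i * Z i := by
  have h : ∀ f : Fin c → Fin m, (∏ j, π (f j)) * Z (f j₀)
      = ∏ j, (π (f j) * (if j = j₀ then Z (f j) else 1)) := by
    intro f
    rw [Finset.prod_mul_distrib]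
    congr 1
    simp
  simp_rw [h]
  rw [sum_pi_prod (fun j i => π i * (if j = j₀ then Z i else 1))]
  have h2 : ∀ j : Fin c, (∑ i, π i * (if j = j₀ then Z i else 1))
      = if j = j₀ then (∑ i, π i * Z i) else 1 := by
    intro j; split_ifs with h <;> simp [hπ1]
  simp_rw [h2]
  simp

lemma marg2 {m c : ℕ} (π : Fin m → ℝ) (hπ1 : ∑ i, π i = 1)
    (Z : Fin m → ℝ) (j₀ j₁ : Fin c) (hne : j₀ ≠ j₁) :
    ∑ f : Fin c → Fin m, (∏ j, π (f j)) * (Z (f j₀) * Z (f j₁))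
      = (∑ i, π i * Z i) ^ 2 := by
  have h : ∀ f : Fin c → Fin m, (∏ j, π (f j)) * (Z (f j₀) * Z (f j₁))
      = ∏ j, (π (f j) * ((if j = j₀ then Z (f j) else 1) * (if j = j₁ then Z (f j) else 1))) := by
    intro f
    simp_rw [Finset.prod_mul_distrib]
    simp
  simp_rw [h]
  rw [sum_pi_prod (fun j i => π i * ((if j = j₀ then Z i else 1) * (if j = j₁ then Z i else 1)))]
  have h2 : ∀ j : Fin c, (∑ i, π i * ((if j = j₀ then Z i else 1) * (if j = j₁ then Z i else 1)))
      = (if j = j₀ then (∑ i, π i * Z i) else 1) * (if j = j₁ then (∑ i, π i * Z i) else 1) := by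
    intro j
    split_ifs with h0 h1 h1
    · exact absurd (h0.symm.trans h1) hne
    · simp
    · simp
    · simp [hπ1]
  simp_rw [h2, Finset.prod_mul_distrib]
  simp [sq]

lemma var_le {m c : ℕ} (hc : 0 < c) (π Y : Fin m → ℝ) (hπ1 : ∑ i, π i = 1) :
    ∑ f : Fin c → Fin m, (∏ j, π (f j)) * ((∑ i, π i * Y i) - (∑ j, Y (f j)) / c) ^ 2
      ≤ (∑ i, π i * Y i ^ 2) / c := by
  set μ := ∑ i, π i * Y i with hμ
  set ν := ∑ i, π i * Y i ^ 2 with hν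
  have hc' : (c : ℝ) ≠ 0 := Nat.cast_ne_zero.mpr hc.ne'
  have TS : ∑ f : Fin c → Fin m, (∏ j, π (f j)) * (∑ j, Y (f j)) = c * μ := by
    simp_rw [Finset.mul_sum]
    rw [Finset.sum_comm]
    rw [Finset.sum_congr rfl fun j _ => marg1 π hπ1 Y j]
    simp [mul_comm]
    exact Or.inl rfl
  have pair : ∀ j₀ j₁ : Fin c,
      ∑ f : Fin c → Fin m, (∏ j, π (f j)) * (Y (f j₀) * Y (f j₁))
        = if j₀ = j₁ then ν else μ ^ 2 := by
    intro j₀ j₁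
    by_cases h : j₀ = j₁
    · subst h
      rw [if_pos rfl, hν]
      have := marg1 π hπ1 (fun i => Y i ^ 2) j₀
      simpa [sq] using this
    · rw [if_neg h]
      exact marg2 π hπ1 Y j₀ j₁ h
  have TSS : ∑ f : Fin c → Fin m, (∏ j, π (f j)) * ((∑ j, Y (f j)) * (∑ j, Y (f j)))
      = c * ν + (c * (c - 1)) * μ ^ 2 := by
    have hexp : ∀ f : Fin c → Fin m,
        (∏ j, π (f j)) * ((∑ j, Y (f j)) * (∑ j, Y (f j)))
          = ∑ j₀ : Fin c, ∑ j₁ : Fin c, (∏ j, π (f j)) * (Y (f j₀) * Y (f j₁)) := by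
      intro f
      rw [Finset.sum_mul_sum]
      simp [Finset.mul_sum]
    simp_rw [hexp]
    rw [Finset.sum_comm]
    have : ∀ j₀ : Fin c, ∑ f : Fin c → Fin m, ∑ j₁ : Fin c,
        (∏ j, π (f j)) * (Y (f j₀) * Y (f j₁))
        = ν + (c - 1) * μ ^ 2 := by
      intro j₀
      rw [Finset.sum_comm]
      rw [Finset.sum_congr rfl fun j₁ _ => pair j₀ j₁]
      have : ∀ j₁ : Fin c, (if j₀ = j₁ then ν else μ ^ 2)
          = μ ^ 2 + (if j₀ = j₁ then ν - μ ^ 2 else 0) := by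
        intro j₁; split_ifs <;> ring
      simp_rw [this]
      rw [Finset.sum_add_distrib, Finset.sum_ite_eq]
      simp
      ring
    rw [Finset.sum_congr rfl fun j₀ _ => this j₀]
    simp
    ring
  have expand : ∀ f : Fin c → Fin m,
      (∏ j, π (f j)) * (μ - (∑ j, Y (f j)) / c) ^ 2
        = μ ^ 2 * (∏ j, π (f j))
          - (2 * μ / c) * ((∏ j, π (f j)) * (∑ j, Y (f j)))
          + (1 / (c : ℝ) ^ 2) * ((∏ j, π (f j)) * ((∑ j, Y (f j)) * (∑ j, Y (f j)))) := by
    intro f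
    field_simp
    ring
  calc ∑ f : Fin c → Fin m, (∏ j, π (f j)) * (μ - (∑ j, Y (f j)) / c) ^ 2
      = μ ^ 2 * (∑ f : Fin c → Fin m, ∏ j, π (f j))
        - (2 * μ / c) * (∑ f : Fin c → Fin m, (∏ j, π (f j)) * (∑ j, Y (f j)))
        + (1 / (c : ℝ) ^ 2) * (∑ f : Fin c → Fin m, (∏ j, π (f j)) * ((∑ j, Y (f j)) * (∑ j, Y (f j)))) := by
        simp_rw [expand]
        rw [Finset.sum_add_distrib, Finset.sum_sub_distrib, ← Finset.mul_sum, ← Finset.mul_sum,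
          ← Finset.mul_sum]
    _ = (ν - μ ^ 2) / c := by
        rw [marg0 π hπ1, TS, TSS]
        field_simp
        ring
    _ ≤ ν / c := by
        have hcpos : (0:ℝ) < c := Nat.cast_pos.mpr hc
        gcongr
        exact sub_le_self _ (sq_nonneg μ)


/-- Squared Frobenius norm of a matrix. -/
def frobSq {ι κ : Type*} [Fintype ι] [Fintype κ] (A : Matrix ι κ ℝ) : ℝ :=
  ∑ i, ∑ j, (A i j) ^ 2

/-- Squared Euclidean norm of the `i`-th row of `A`. -/
def rowSq {m K : ℕ} (A : Matrix (Fin m) (Fin K) ℝ) (i : Fin m) : ℝ := ∑ j, (A i j) ^ 2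

/-- The sketch matrix whose `j`-th row is `A_{f j,:} / √(c π(f j))`. -/
def sketch {m K : ℕ} (A : Matrix (Fin m) (Fin K) ℝ) (π : Fin m → ℝ) (c : ℕ)
    (f : Fin c → Fin m) : Matrix (Fin c) (Fin K) ℝ :=
  Matrix.of fun j k => A (f j) k / Real.sqrt (c * π (f j))

/-- Monte Carlo variance reduction for the row-norm sampling sketch:
`E[‖AᵀA − CᵀC‖_F²] ≤ ‖A‖_F⁴ / c`, the expectation taken over i.i.d. draws
`i₁,…,i_c ∼ π` with exact row-norm probabilities `π(i) = ‖A_{i,:}‖₂²/‖A‖_F²`. -/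
theorem stmt3 {m K c : ℕ} (hc : 0 < c)
    (A : Matrix (Fin m) (Fin K) ℝ) (hA : A ≠ 0)
    (π : Fin m → ℝ) (hπ : ∀ i, π i = rowSq A i / frobSq A) :
    ∑ f : Fin c → Fin m,
        (∏ j, π (f j)) * frobSq (Aᵀ * A - (sketch A π c f)ᵀ * (sketch A π c f))
      ≤ (frobSq A) ^ 2 / c := by
  classical
  have hFnn : 0 ≤ frobSq A :=
    Finset.sum_nonneg fun i _ => Finset.sum_nonneg fun j _ => sq_nonneg _
  have hFpos : 0 < frobSq A := by
    rcases hFnn.lt_or_eq with h | h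
    · exact h
    · exfalso; apply hA
      have h0 : ∀ i ∈ (univ : Finset (Fin m)), rowSq A i = 0 := by
        intro i _
        have := (Finset.sum_eq_zero_iff_of_nonneg
          (fun i _ => Finset.sum_nonneg fun j _ => sq_nonneg (A i j))).mp h.symm
        exact this i (mem_univ i)
      ext i j
      have := (Finset.sum_eq_zero_iff_of_nonneg
        (fun j _ => sq_nonneg (A i j))).mp (h0 i (mem_univ i)) j (mem_univ j)
      simpa using pow_eq_zero_iff (n := 2) (by norm_num) |>.mp this
  have hsumrow : ∑ i, rowSq A i = frobSq A := rfl
  have hπ1 : ∑ i, π i = 1 := by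
    simp_rw [hπ]
    rw [← Finset.sum_div, hsumrow, div_self hFpos.ne']
  have hπnn : ∀ i, 0 ≤ π i := fun i => by
    rw [hπ]
    exact div_nonneg (Finset.sum_nonneg fun j _ => sq_nonneg _) hFnn
  have hzero : ∀ i, π i = 0 → ∀ k, A i k = 0 := by
    intro i h0 k
    rw [hπ i, div_eq_zero_iff] at h0
    rcases h0 with h0 | h0
    · have := (Finset.sum_eq_zero_iff_of_nonneg
        (fun j _ => sq_nonneg (A i j))).mp h0 k (mem_univ k)
      simpa using pow_eq_zero_iff (n := 2) (by norm_num) |>.mp this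
    · exact absurd h0 hFpos.ne'
  set Y : Fin K → Fin K → Fin m → ℝ := fun k l i => A i k * A i l / π i with hY
  have hμ : ∀ k l, ∑ i, π i * Y k l i = ∑ i, A i k * A i l := by
    intro k l
    refine Finset.sum_congr rfl fun i _ => ?_
    by_cases h : π i = 0
    · simp [hY, h, hzero i h k]
    · simp only [hY]
      field_simp
  have hentry : ∀ (f : Fin c → Fin m) (k l : Fin K),
      (Aᵀ * A - (sketch A π c f)ᵀ * sketch A π c f) k l
        = (∑ i, π i * Y k l i) - (∑ j, Y k l (f j)) / c := by
    intro f k l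
    rw [hμ]
    simp only [Matrix.sub_apply, Matrix.mul_apply, Matrix.transpose_apply, sketch,
      Matrix.of_apply]
    congr 1
    rw [Finset.sum_div]
    refine Finset.sum_congr rfl fun j _ => ?_
    rw [div_mul_div_comm, Real.mul_self_sqrt (mul_nonneg (Nat.cast_nonneg c) (hπnn (f j)))]
    simp only [hY]
    ring
  have hfrob : ∀ f : Fin c → Fin m,
      frobSq (Aᵀ * A - (sketch A π c f)ᵀ * sketch A π c f)
        = ∑ k, ∑ l, ((∑ i, π i * Y k l i) - (∑ j, Y k l (f j)) / c) ^ 2 := by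
    intro f
    simp only [frobSq]
    exact Finset.sum_congr rfl fun k _ => Finset.sum_congr rfl fun l _ => by rw [hentry]
  have key : ∀ i, π i * (∑ k, ∑ l, Y k l i ^ 2) = rowSq A i * frobSq A := by
    intro i
    by_cases h : π i = 0
    · have hr : rowSq A i = 0 := by
        rw [hπ i] at h
        rcases div_eq_zero_iff.mp h with h0 | h0
        · exact h0
        · exact absurd h0 hFpos.ne'
      simp [h, hr]
    · have h1 : ∑ k, ∑ l, Y k l i ^ 2 = (rowSq A i) ^ 2 / (π i) ^ 2 := by
        simp only [hY, div_pow, mul_pow, rowSq]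
        rw [pow_two (∑ j, A i j ^ 2), Finset.sum_mul_sum, Finset.sum_div]
        exact Finset.sum_congr rfl fun k _ => by rw [Finset.sum_div]
      have hr : rowSq A i ≠ 0 := fun h0 => h (by rw [hπ i, h0, zero_div])
      rw [h1, hπ i]
      field_simp
  calc ∑ f : Fin c → Fin m,
        (∏ j, π (f j)) * frobSq (Aᵀ * A - (sketch A π c f)ᵀ * sketch A π c f)
      = ∑ k, ∑ l, ∑ f : Fin c → Fin m,
          (∏ j, π (f j)) * ((∑ i, π i * Y k l i) - (∑ j, Y k l (f j)) / c) ^ 2 := by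
        simp_rw [hfrob, Finset.mul_sum]
        rw [Finset.sum_comm]
        exact Finset.sum_congr rfl fun k _ => Finset.sum_comm
    _ ≤ ∑ k, ∑ l, (∑ i, π i * (Y k l i) ^ 2) / c :=
        Finset.sum_le_sum fun k _ => Finset.sum_le_sum fun l _ => var_le hc π (Y k l) hπ1
    _ = (∑ i, π i * ∑ k, ∑ l, Y k l i ^ 2) / c := by
        simp_rw [← Finset.sum_div]
        congr 1
        rw [Finset.sum_congr rfl fun k (_ : k ∈ univ) => Finset.sum_comm, Finset.sum_comm]
        simp_rw [Finset.mul_sum]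
    _ = (frobSq A) ^ 2 / c := by
        rw [Finset.sum_congr rfl fun i (_ : i ∈ univ) => key i, ← Finset.sum_mul, hsumrow,
          ← pow_two]


end
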